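/- Let $f = (f_1,\dots,f_N)$ and $g = (g_1,\dots,g_N)$ be triangular tuples of polynomials over a field $k$, and assume that $f_1,\dots,f_N$ are algebraically independent over $k$ and that $g_1,\dots,g_N$ are algebraically independent over $k$. Then for every $1 \le i \le N$, $\deg_{x_i}\big(f_i(g_1,\dots,g_N)\big) = \deg_{x_i}(f_i) \cdot \deg_{x_i}(g_i)$; that is, the diagonal entries of the degree matrix are multiplicative under composition. -/

import Mathlib

open MvPolynomial

private lemma degreeOf_ne_zero_of_mem_vars {k : Type*} [CommSemiring k] {σ : Type*} {t : σ}
    {c : MvPolynomial σ k} (h : t ∈ c.vars) : degreeOf t c ≠ 0 := by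
  rw [mem_vars] at h
  obtain ⟨d, hd, ht⟩ := h
  have h1 := monomial_le_degreeOf t hd
  have h2 : d t ≠ 0 := Finsupp.mem_support_iff.mp ht
  omega

/-- For triangular tuples `f`, `g` of polynomials over a field `k`
whose components are algebraically independent over `k`, the diagonal entries of the degree
matrix are multiplicative under composition:
`deg_{xᵢ}(fᵢ(g₁,…,g_N)) = deg_{xᵢ}(fᵢ) * deg_{xᵢ}(gᵢ)`. -/
theorem degreeOf_diag_comp_eq_mul
    {k : Type*} [Field k] {N : ℕ}
    (f g : Fin N → MvPolynomial (Fin N) k)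
    (hf : ∀ i j : Fin N, j < i → degreeOf j (f i) = 0)
    (hg : ∀ i j : Fin N, j < i → degreeOf j (g i) = 0)
    (hfind : AlgebraicIndependent k f)
    (hgind : AlgebraicIndependent k g)
    (i : Fin N) :
    degreeOf i (bind₁ g (f i)) = degreeOf i (f i) * degreeOf i (g i) := by
  obtain ⟨n, rfl⟩ : ∃ n, N = n + 1 := ⟨N - 1, (Nat.succ_pred_eq_of_pos i.pos).symm⟩
  set σe := Equiv.swap i (0 : Fin (n + 1)) with hσe
  -- the isomorphism singling out the variable `i`
  set Φ : MvPolynomial (Fin (n + 1)) k ≃ₐ[k] Polynomial (MvPolynomial (Fin n) k) :=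
    (renameEquiv k σe).trans (finSuccEquiv k n) with hΦ
  have hΦapp : ∀ p, Φ p = finSuccEquiv k n (rename σe p) := fun p => rfl
  have hdeg : ∀ p : MvPolynomial (Fin (n + 1)) k, (Φ p).natDegree = degreeOf i p := by
    intro p
    rw [hΦapp, natDegree_finSuccEquiv]
    have h := degreeOf_rename_of_injective σe.injective (p := p) i
    rwa [hσe, Equiv.swap_apply_left] at h
  -- the remaining variables
  set j : Fin n → Fin (n + 1) := fun t => σe.symm t.succ with hj
  have hjinj : Function.Injective j :=
    fun a b hab => Fin.succ_injective n (σe.symm.injective hab)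
  have hσj : ∀ t, σe (j t) = t.succ := fun t => σe.apply_symm_apply _
  have hji : ∀ t, j t ≠ i := by
    intro t ht
    apply Fin.succ_ne_zero t
    calc t.succ = σe (j t) := (hσj t).symm
      _ = σe i := by rw [ht]
      _ = 0 := by rw [hσe]; exact Equiv.swap_apply_left i 0
  set P := Φ (f i) with hP
  set Q := Φ (g i) with hQ
  set γ : MvPolynomial (Fin n) k →ₐ[k] Polynomial (MvPolynomial (Fin n) k) :=
    Φ.toAlgHom.comp (aeval (fun t => g (j t))) with hγ
  have hγX : ∀ t, γ (X t) = Φ (g (j t)) := by intro t; simp [hγ]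
  -- the key factorisation
  have key : Φ (bind₁ g (f i)) = Polynomial.eval₂ (γ : _ →+* _) Q P := by
    have hhom : (Φ : MvPolynomial (Fin (n + 1)) k →+* Polynomial (MvPolynomial (Fin n) k)).comp
        ((bind₁ g : MvPolynomial (Fin (n + 1)) k →ₐ[k] _) : _ →+* _)
        = (Polynomial.eval₂RingHom (γ : _ →+* _) Q).comp
          (Φ : MvPolynomial (Fin (n + 1)) k →+* Polynomial (MvPolynomial (Fin n) k)) := by
      apply ringHom_ext
      · intro r
        simp [hΦapp, finSuccEquiv_apply, algebraMap_eq]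
      · intro m
        rcases eq_or_ne m i with rfl | hmi
        · have h1 : Φ (X m) = Polynomial.X := by
            rw [hΦapp, rename_X, hσe, Equiv.swap_apply_left, finSuccEquiv_X_zero]
          simp [h1, hQ]
        · have hu : σe m ≠ 0 := by
            intro h0
            exact hmi (σe.injective (by rw [h0, hσe, Equiv.swap_apply_left]))
          set t : Fin n := (σe m).pred hu with htdef
          have hts : t.succ = σe m := Fin.succ_pred _ hu
          have hjt : j t = m := by rw [hj]; simp only [hts]; exact σe.symm_apply_apply m
          have h1 : Φ (X m) = Polynomial.C (X t) := by
            rw [hΦapp, rename_X, ← hts, finSuccEquiv_X_succ]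
          simp only [RingHom.coe_comp, Function.comp_apply, RingHom.coe_coe, AlgHom.coe_coe,
            bind₁_X_right, Polynomial.coe_eval₂RingHom, h1, Polynomial.eval₂_C]
          rw [← hjt, ← hγX t]
    exact RingHom.congr_fun hhom (f i)
  -- coefficients of P only involve variables beyond i
  have hPcoeff : ∀ (m : ℕ) (t : Fin n), ¬ i < j t → degreeOf t (P.coeff m) = 0 := by
    intro m t ht
    have hlt : j t < i := lt_of_le_of_ne (not_lt.mp ht) (hji t)
    have h1 : degreeOf t (P.coeff m) ≤ degreeOf t.succ (rename σe (f i)) :=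
      degreeOf_coeff_finSuccEquiv (rename σe (f i)) t m
    have h2 : degreeOf t.succ (rename σe (f i)) = degreeOf (j t) (f i) := by
      have h3 := degreeOf_rename_of_injective σe.injective (p := f i) (j t)
      rwa [hσj] at h3
    have h4 := hf i (j t) hlt
    omega
  have hPvars : ∀ (m : ℕ) (t : Fin n), t ∈ (P.coeff m).vars → i < j t := by
    intro m t ht
    by_contra hc
    exact degreeOf_ne_zero_of_mem_vars ht (hPcoeff m t hc)
  -- coefficient substitution map
  set δ : MvPolynomial (Fin n) k →ₐ[k] MvPolynomial (Fin n) k :=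
    aeval (fun t => if i < j t then (Φ (g (j t))).coeff 0 else 0) with hδ
  have hγδ : ∀ c : MvPolynomial (Fin n) k, (∀ t, t ∈ c.vars → i < j t) →
      γ c = Polynomial.C (δ c) := by
    intro c hc
    show (↑γ : MvPolynomial (Fin n) k →+* Polynomial (MvPolynomial (Fin n) k)) c
      = (Polynomial.C.comp
        (↑δ : MvPolynomial (Fin n) k →+* MvPolynomial (Fin n) k)) c
    apply hom_congr_vars
    · ext r
      simp [hγ, hδ, hΦapp, finSuccEquiv_apply, algebraMap_eq]
    · intro t ht _
      have hit : i < j t := hc t ht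
      have h1 : Φ (g (j t)) = Polynomial.C ((Φ (g (j t))).coeff 0) := by
        apply Polynomial.eq_C_of_natDegree_eq_zero
        rw [hdeg]
        exact hg (j t) i hit
      simp only [RingHom.coe_comp, Function.comp_apply, RingHom.coe_coe]
      rw [hγX t, h1, hδ, aeval_X, if_pos hit]
    · rfl
  -- the composition formula
  have comp_eq : Polynomial.eval₂ (γ : _ →+* _) Q P = (P.map (δ : _ →+* _)).comp Q := by
    rw [Polynomial.comp, Polynomial.eval₂_map]
    rw [Polynomial.eval₂_eq_sum, Polynomial.eval₂_eq_sum, Polynomial.sum_def, Polynomial.sum_def]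
    refine Finset.sum_congr rfl fun e _ => ?_
    simp only [RingHom.coe_coe, RingHom.coe_comp, Function.comp_apply]
    rw [hγδ _ (hPvars e)]
  -- δ does not kill the leading coefficient of P
  have hlead : P ≠ 0 → δ P.leadingCoeff ≠ 0 := by
    intro hPne h0
    have hγ0 : γ P.leadingCoeff = 0 := by
      have hv : ∀ t ∈ (P.leadingCoeff).vars, i < j t := hPvars P.natDegree
      rw [hγδ _ hv, h0, map_zero]
    have hγc : γ P.leadingCoeff = Φ (aeval (fun t => g (j t)) P.leadingCoeff) := by
      simp [hγ]
    have hginj : Function.Injective (aeval (fun t => g (j t)) :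
        MvPolynomial (Fin n) k →ₐ[k] MvPolynomial (Fin (n + 1)) k) :=
      algebraicIndependent_iff_injective_aeval.mp (hgind.comp j hjinj)
    have : aeval (fun t => g (j t)) P.leadingCoeff = 0 :=
      Φ.injective (by rw [← hγc, hγ0, map_zero])
    have hc0 : P.leadingCoeff = 0 := hginj (by rw [this, map_zero])
    exact Polynomial.leadingCoeff_ne_zero.mpr hPne hc0
  -- conclude
  rw [← hdeg (bind₁ g (f i)), key, comp_eq, ← hdeg (f i), ← hdeg (g i), ← hP, ← hQ]
  rw [Polynomial.natDegree_comp]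
  congr 1
  by_cases hPne : P = 0
  · rw [hPne, Polynomial.map_zero]
  · exact Polynomial.natDegree_map_of_leadingCoeff_ne_zero _ (hlead hPne)
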